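/- Let A be an m×n real matrix with full column rank n and rows of unit Euclidean norm, let b ∈ ℝ^m, let x ∈ ℝ^n be fixed, and set e = Ax − b. Let x_0, x_1, ..., x_K be iterates of Motzkin's method started at an arbitrary x_0, and suppose that for every k with 0 ≤ k ≤ K−1 the iterate satisfies ‖Ax_k − b‖_∞ > 4‖e‖_∞ and A x_k ≠ A x. Then ‖x_K − x‖² ≤ (1 − σ_min(A)²/(4m))^K ‖x_0 − x‖² + 2 m σ_min(A)^{−2} ‖e‖_∞². -/
import Mathlib

open Finset in
theorem motzkin_step {m n : ℕ} (A : Matrix (Fin m) (Fin n) ℝ)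
    (hrows : ∀ i : Fin m, ∑ j, (A i j) ^ 2 = 1)
    (σ : ℝ)
    (hσmin : ∀ v : Fin n → ℝ, σ ^ 2 * ∑ j, (v j) ^ 2 ≤ ∑ i, (A.mulVec v i) ^ 2)
    (b : Fin m → ℝ) (x : Fin n → ℝ) (e : Fin m → ℝ)
    (he : e = A.mulVec x - b)
    (y : Fin n → ℝ) (i : Fin m)
    (hmax : ∀ j : Fin m, (A.mulVec y j - b j) ^ 2 ≤ (A.mulVec y i - b i) ^ 2)
    (hres : 4 * ‖e‖ < ‖A.mulVec y - b‖) :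
    ∑ j, ((y + (b i - A.mulVec y i) • A i) j - x j) ^ 2 ≤
      (1 - σ ^ 2 / (4 * m)) * ∑ j, (y j - x j) ^ 2 + ‖e‖ ^ 2 / 2 := by
  have hm : (0:ℝ) < m := by exact_mod_cast i.pos
  set R : ℝ := A.mulVec y i - b i with hR
  set d : Fin n → ℝ := fun j => y j - x j with hd
  set S : ℝ := ∑ j, (d j) ^ 2 with hS
  clear_value R d S
  have hS0 : 0 ≤ S := by rw [hS]; exact Finset.sum_nonneg fun j _ => sq_nonneg _
  have hAd : ∀ j : Fin m, A.mulVec d j = (A.mulVec y j - b j) - e j := by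
    intro j
    have h1 : A.mulVec d j = A.mulVec y j - A.mulVec x j := by
      simp [Matrix.mulVec, dotProduct, hd, mul_sub, Finset.sum_sub_distrib]
    rw [h1, he]; simp
  -- expansion of the LHS
  have hLHS : ∑ j, ((y + (b i - A.mulVec y i) • A i) j - x j) ^ 2
      = S - R ^ 2 + 2 * R * e i := by
    have hexp : ∑ j, ((y + (b i - A.mulVec y i) • A i) j - x j) ^ 2
        = ∑ j, (d j)^2 - R * ∑ j, (2 * (A i j * d j)) + R^2 * ∑ j, (A i j)^2 := by
      rw [Finset.mul_sum, Finset.mul_sum, ← Finset.sum_sub_distrib, ← Finset.sum_add_distrib]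
      apply Finset.sum_congr rfl
      intro j _
      simp only [Pi.add_apply, Pi.smul_apply, smul_eq_mul, hd]
      rw [hR]
      ring
    rw [hexp, hrows i]
    have hmv : ∑ j, (2 * (A i j * d j)) = 2 * (R - e i) := by
      have hh : A.mulVec d i = R - e i := by rw [hR]; exact hAd i
      rw [← hh]
      simp [Matrix.mulVec, dotProduct, Finset.mul_sum]
    rw [hmv, ← hS]; ring
  rw [hLHS]
  -- |r j| ≤ |R| for all j, hence ‖r‖ ≤ |R|
  have habs : ∀ j : Fin m, |A.mulVec y j - b j| ≤ |R| := by
    intro j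
    have := hmax j
    nlinarith [abs_nonneg (A.mulVec y j - b j), abs_nonneg R,
      sq_abs (A.mulVec y j - b j), sq_abs R]
  have hnr : ‖A.mulVec y - b‖ ≤ |R| := by
    rw [pi_norm_le_iff_of_nonneg (abs_nonneg R)]
    intro j
    simpa [Real.norm_eq_abs] using habs j
  have heR : 4 * ‖e‖ < |R| := lt_of_lt_of_le hres hnr
  have henn : 0 ≤ ‖e‖ := norm_nonneg e
  -- key1 : 2 R e_i ≤ R^2 / 2
  have hei : |e i| ≤ ‖e‖ := by
    simpa [Real.norm_eq_abs] using norm_le_pi_norm e i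
  have key1 : 2 * R * e i ≤ R ^ 2 / 2 := by
    have h1 : R * e i ≤ |R| * |e i| := (le_abs_self _).trans (le_of_eq (abs_mul _ _))
    have h2 : |R| * |e i| ≤ |R| * ‖e‖ := mul_le_mul_of_nonneg_left hei (abs_nonneg R)
    have h3 : |R| * (4 * ‖e‖) ≤ |R| * |R| := mul_le_mul_of_nonneg_left heR.le (abs_nonneg R)
    have h4 : |R| * |R| = R ^ 2 := by rw [abs_mul_abs_self]; ring
    nlinarith
  -- key2 : σ² S ≤ 2 m R² + 2 m ‖e‖²
  have hsum_r : ∑ j, (A.mulVec y j - b j)^2 ≤ m * R^2 := by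
    calc ∑ j, (A.mulVec y j - b j)^2 ≤ ∑ _j : Fin m, R^2 :=
          Finset.sum_le_sum (fun j _ => hmax j)
      _ = m * R^2 := by simp [Finset.sum_const, mul_comm]
  have hsum_e : ∑ j, (e j)^2 ≤ m * ‖e‖^2 := by
    calc ∑ j, (e j)^2 ≤ ∑ _j : Fin m, ‖e‖^2 := by
          apply Finset.sum_le_sum
          intro j _
          have := hei
          have h := norm_le_pi_norm e j
          rw [Real.norm_eq_abs] at h
          nlinarith [abs_nonneg (e j), sq_abs (e j)]
      _ = m * ‖e‖^2 := by simp [Finset.sum_const, mul_comm]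
  have key2 : σ^2 * S ≤ 2 * m * R^2 + 2 * m * ‖e‖^2 := by
    have h1 : σ ^ 2 * S ≤ ∑ j, (A.mulVec d j) ^ 2 := by rw [hS]; exact hσmin d
    have h2 : ∑ j, (A.mulVec d j)^2 ≤ 2 * ∑ j, (A.mulVec y j - b j)^2 + 2 * ∑ j, (e j)^2 := by
      rw [Finset.mul_sum, Finset.mul_sum, ← Finset.sum_add_distrib]
      apply Finset.sum_le_sum
      intro j _
      rw [hAd j]
      nlinarith [sq_nonneg ((A.mulVec y j - b j) + e j)]
    calc σ^2 * S ≤ ∑ j, (A.mulVec d j)^2 := h1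
      _ ≤ 2 * ∑ j, (A.mulVec y j - b j)^2 + 2 * ∑ j, (e j)^2 := h2
      _ ≤ 2 * m * R^2 + 2 * m * ‖e‖^2 := by nlinarith
  -- combine
  have hfrac : σ^2/(4*m) * S ≤ R^2/2 + ‖e‖^2/2 := by
    rw [div_mul_eq_mul_div, div_le_iff₀ (by positivity)]
    have hrg : (R^2/2 + ‖e‖^2/2) * (4*(m:ℝ)) = 2*↑m*R^2 + 2*↑m*‖e‖^2 := by ring
    linarith
  linarith


/-- **Exponential convergence rate (inequality (5) of Corollary 1).**
`A` is an `m × n` real matrix (`m ≥ n`) with full column rank `n` and rows of unit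
Euclidean norm; `σ` denotes its smallest singular value, which is positive and
satisfies `σ ‖v‖ ≤ ‖A v‖` for all `v` (stated with squared Euclidean norms).
`b ∈ ℝ^m`, `x ∈ ℝ^n` is fixed, `e = A x - b`, and `‖·‖` on `Fin m → ℝ` is the sup
(max) norm.  `xs 0, xs 1, …, xs K` are Motzkin iterates started at an arbitrary
`xs 0`, and for every `k < K` we have `‖A (xs k) - b‖_∞ > 4 ‖e‖_∞` and
`A (xs k) ≠ A x`.  Then
`‖xs K - x‖² ≤ (1 - σ²/(4 m))^K ‖xs 0 - x‖² + 2 m σ⁻² ‖e‖_∞²`. -/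
theorem motzkin_exponential_convergence
    {m n : ℕ} (hmn : n ≤ m) (A : Matrix (Fin m) (Fin n) ℝ)
    (hrank : A.rank = n)
    (hrows : ∀ i : Fin m, ∑ j, (A i j) ^ 2 = 1)
    (σ : ℝ) (hσ : 0 < σ)
    (hσmin : ∀ v : Fin n → ℝ, σ ^ 2 * ∑ j, (v j) ^ 2 ≤ ∑ i, (A.mulVec v i) ^ 2)
    (b : Fin m → ℝ) (x : Fin n → ℝ) (e : Fin m → ℝ)
    (he : e = A.mulVec x - b)
    (K : ℕ) (xs : ℕ → Fin n → ℝ)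
    (hiter : ∀ k < K, ∃ i : Fin m,
      (∀ j : Fin m, (A.mulVec (xs k) j - b j) ^ 2 ≤ (A.mulVec (xs k) i - b i) ^ 2) ∧
      xs (k + 1) = xs k + (b i - A.mulVec (xs k) i) • A i)
    (hres : ∀ k < K, 4 * ‖e‖ < ‖A.mulVec (xs k) - b‖)
    (hne : ∀ k < K, A.mulVec (xs k) ≠ A.mulVec x) :
    ∑ j, (xs K j - x j) ^ 2 ≤
      (1 - σ ^ 2 / (4 * m)) ^ K * ∑ j, (xs 0 j - x j) ^ 2
        + 2 * m * (σ ^ 2)⁻¹ * ‖e‖ ^ 2 := by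
  rcases Nat.eq_zero_or_pos K with hK | hK
  · subst hK
    have h0 : 0 ≤ 2 * (m:ℝ) * (σ ^ 2)⁻¹ * ‖e‖ ^ 2 := by positivity
    simp only [pow_zero, one_mul]
    linarith
  rcases Nat.eq_zero_or_pos n with hn | hn
  · subst hn
    have h0 : ∀ k, ∑ j : Fin 0, (xs k j - x j) ^ 2 = 0 := fun k => by simp
    rw [h0, h0]
    have h1 : 0 ≤ 2 * (m:ℝ) * (σ ^ 2)⁻¹ * ‖e‖ ^ 2 := by positivity
    simp only [mul_zero, zero_add]
    exact h1
  -- main case: K ≥ 1, n ≥ 1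
  obtain ⟨i0, -, -⟩ := hiter 0 hK
  have hm : (0:ℝ) < m := by exact_mod_cast i0.pos
  -- σ² ≤ m
  have hσm : σ ^ 2 ≤ m := by
    set v : Fin n → ℝ := fun j => if j = ⟨0, hn⟩ then 1 else 0 with hv
    have hv1 : ∑ j, (v j) ^ 2 = 1 := by
      rw [hv]
      simp [apply_ite (fun t : ℝ => t ^ 2), Finset.sum_ite_eq']
    have h1 := hσmin v
    rw [hv1, mul_one] at h1
    have h2 : ∀ i : Fin m, A.mulVec v i = A i ⟨0, hn⟩ := by
      intro i
      rw [hv]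
      simp [Matrix.mulVec, dotProduct, mul_ite, Finset.sum_ite_eq']
    have h3 : ∑ i, (A.mulVec v i) ^ 2 ≤ m := by
      calc ∑ i, (A.mulVec v i) ^ 2 = ∑ i, (A i ⟨0, hn⟩) ^ 2 := by
            exact Finset.sum_congr rfl fun i _ => by rw [h2 i]
        _ ≤ ∑ _i : Fin m, (1:ℝ) := by
            apply Finset.sum_le_sum
            intro i _
            calc (A i ⟨0, hn⟩) ^ 2 ≤ ∑ j, (A i j) ^ 2 :=
                  Finset.single_le_sum (f := fun j => (A i j) ^ 2)
                    (fun j _ => sq_nonneg _) (Finset.mem_univ _)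
              _ = 1 := hrows i
        _ = m := by simp
    linarith
  set q : ℝ := 1 - σ ^ 2 / (4 * m) with hq
  have hq0 : 0 ≤ q := by
    rw [hq]
    have : σ ^ 2 / (4 * m) ≤ 1 := by
      rw [div_le_one (by positivity)]
      linarith
    linarith
  set c : ℝ := ‖e‖ ^ 2 / 2 with hc
  have hc0 : 0 ≤ c := by positivity
  set S : ℕ → ℝ := fun k => ∑ j, (xs k j - x j) ^ 2 with hSdef
  have hstep : ∀ k < K, S (k + 1) ≤ q * S k + c := by
    intro k hk
    obtain ⟨i, hmax, hupd⟩ := hiter k hk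
    have h := motzkin_step A hrows σ hσmin b x e he (xs k) i hmax (hres k hk)
    rw [← hupd] at h
    exact h
  have hind : ∀ k, k ≤ K → S k ≤ q ^ k * S 0 + c * ∑ i ∈ Finset.range k, q ^ i := by
    intro k
    induction k with
    | zero => intro _; simp
    | succ k ih =>
      intro hk
      have hk' : k < K := hk
      have h1 := hstep k hk'
      have h2 := ih (le_of_lt hk')
      have h3 : q * S k ≤ q * (q ^ k * S 0 + c * ∑ i ∈ Finset.range k, q ^ i) :=
        mul_le_mul_of_nonneg_left h2 hq0
      calc S (k + 1) ≤ q * S k + c := h1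
        _ ≤ q * (q ^ k * S 0 + c * ∑ i ∈ Finset.range k, q ^ i) + c := by linarith
        _ = q ^ (k + 1) * S 0 + c * ∑ i ∈ Finset.range (k + 1), q ^ i := by
            rw [geom_sum_succ]; ring
  have hfin := hind K le_rfl
  have hgeom : ∑ i ∈ Finset.range K, q ^ i ≤ (1 - q)⁻¹ := by
    have hq1 : q < 1 := by
      rw [hq]
      have : 0 < σ ^ 2 / (4 * m) := by positivity
      linarith
    have h := geom_sum_Ico_le_of_lt_one hq0 hq1 (m := 0) (n := K)
    rw [← Finset.range_eq_Ico] at h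
    simpa [one_div] using h
  have hcq : c * (1 - q)⁻¹ = 2 * m * (σ ^ 2)⁻¹ * ‖e‖ ^ 2 := by
    rw [hc, hq]
    have hσ2 : σ ^ 2 ≠ 0 := by positivity
    have hm' : (4 * (m:ℝ)) ≠ 0 := by positivity
    field_simp
    ring
  have h4 : c * ∑ i ∈ Finset.range K, q ^ i ≤ c * (1 - q)⁻¹ :=
    mul_le_mul_of_nonneg_left hgeom hc0
  calc S K ≤ q ^ K * S 0 + c * ∑ i ∈ Finset.range K, q ^ i := hfin
    _ ≤ q ^ K * S 0 + c * (1 - q)⁻¹ := by linarith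
    _ = q ^ K * S 0 + 2 * m * (σ ^ 2)⁻¹ * ‖e‖ ^ 2 := by rw [hcq]
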